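/- Let S be a subset of the closed unit ball of a real inner product (Euclidean/Hilbert) space H such that 0 ∈ conv S. Then there exists a sequence x_1, x_2, … of points of S such that ‖∑_{i=1}^k x_i‖ ≤ √k for every integer k ≥ 1. -/

import Mathlib

open RealInnerProductSpace

lemma exists_nonpos_inner {H : Type*} [NormedAddCommGroup H] [InnerProductSpace ℝ H]
    (S : Set H) (h0 : (0 : H) ∈ convexHull ℝ S) (v : H) :
    ∃ s ∈ S, ⟪s, v⟫ ≤ 0 := by
  by_contra h
  push_neg at h
  have hC : Convex ℝ {w : H | (0:ℝ) < ⟪w, v⟫} := by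
    have : Convex ℝ {w : H | ((innerSL ℝ v : H →L[ℝ] ℝ) w : ℝ) > 0} :=
      convex_halfSpace_gt (LinearMap.isLinear _) 0
    simpa [real_inner_comm] using this
  have hsub : S ⊆ {w : H | (0:ℝ) < ⟪w, v⟫} := fun s hs => h s hs
  have := convexHull_min hsub hC h0
  simp at this

/-- Folklore Euclidean analogue of the no-dimension Carathéodory theorem: if `S` lies in
the closed unit ball of a real inner product space and `0 ∈ conv S`, then there is a
sequence of points of `S` all of whose partial sums satisfy `‖∑_{i=1}^k x_i‖ ≤ √k`. -/
theorem partial_sums_le_sqrt {H : Type*} [NormedAddCommGroup H] [InnerProductSpace ℝ H]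
    (S : Set H) (hS : S ⊆ Metric.closedBall 0 1) (h0 : (0 : H) ∈ convexHull ℝ S) :
    ∃ x : ℕ → H, (∀ i, x i ∈ S) ∧
      ∀ k : ℕ, 1 ≤ k → ‖∑ i ∈ Finset.range k, x i‖ ≤ Real.sqrt k := by
  classical
  set step : H → H := fun v => (exists_nonpos_inner S h0 v).choose with hstep
  have hstep_mem : ∀ v, step v ∈ S := fun v => (exists_nonpos_inner S h0 v).choose_spec.1
  have hstep_inner : ∀ v, ⟪step v, v⟫ ≤ 0 := fun v =>
    (exists_nonpos_inner S h0 v).choose_spec.2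
  let p : ℕ → H := fun n => Nat.rec 0 (fun _ q => q + step q) n
  have hp : ∀ n, p (n + 1) = p n + step (p n) := fun n => rfl
  refine ⟨fun n => step (p n), fun i => hstep_mem _, ?_⟩
  have hsum : ∀ k, ∑ i ∈ Finset.range k, step (p i) = p k := by
    intro k
    induction k with
    | zero => simp [p]
    | succ n ih => rw [Finset.sum_range_succ, ih, hp]
  have hnormsq : ∀ k : ℕ, ‖p k‖ ^ 2 ≤ (k : ℝ) := by
    intro k
    induction k with
    | zero => simp [p]
    | succ n ih =>
      have hx : ‖step (p n)‖ ≤ 1 := by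
        have := hS (hstep_mem (p n))
        simpa using this
      have hx2 : ‖step (p n)‖ ^ 2 ≤ 1 := by
        nlinarith [norm_nonneg (step (p n))]
      have expand : ‖p (n + 1)‖ ^ 2
          = ‖p n‖ ^ 2 + 2 * ⟪step (p n), p n⟫ + ‖step (p n)‖ ^ 2 := by
        rw [hp]
        rw [@norm_add_sq_real]
        ring_nf
        rw [real_inner_comm]
        ring
      have := hstep_inner (p n)
      push_cast
      nlinarith
  intro k hk
  rw [hsum]
  have h1 : (0:ℝ) ≤ (k : ℝ) := by positivity
  rw [show Real.sqrt (k:ℝ) = Real.sqrt k from rfl, ← Real.sqrt_sq (norm_nonneg (p k))]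
  exact Real.sqrt_le_sqrt (hnormsq k)
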